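/- Deterministic interpolation-inspired barrier certificate soundness: let f: X → X be a deterministic transition map and suppose B₀, ..., B_ℓ: X → ℝ satisfy B_i(x) ≥ 0 for all x ∈ X, B₀(x) ≤ γ for all x ∈ X₀, B_i(x) ≥ 1 for all x ∈ X_u, B_{i+1}(f(x)) ≤ α_i B_i(x) for all x ∈ X \ X_u and 0 ≤ i < ℓ, and B_ℓ(f(x)) ≤ B_ℓ(x) for all x ∈ X \ X_u, where γ ∏_{i=0}^{j−1} α_i < 1 for every 0 ≤ j ≤ ℓ. Then no trajectory x(0) ∈ X₀, x(t+1) = f(x(t)) ever enters X_u; moreover, for each 0 ≤ j < ℓ, B_j(x(j)) ≤ γ ∏_{i=0}^{j−1} α_i, and for all t ≥ ℓ, B_ℓ(x(t)) ≤ γ ∏_{i=0}^{ℓ−1} α_i. -/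
import Mathlib


/-- Deterministic interpolation-inspired barrier certificate soundness: under the
deterministic IBC conditions with `γ ∏_{i<j} α_i < 1` for every `0 ≤ j ≤ ℓ`, no trajectory
starting in `X₀` ever enters `X_u`; moreover `B_j(x(j)) ≤ γ ∏_{i<j} α_i` for `0 ≤ j < ℓ` and
`B_ℓ(x(t)) ≤ γ ∏_{i<ℓ} α_i` for all `t ≥ ℓ`. -/
theorem stmt_19 {X : Type*} (Xs X0 Xu : Set X) (hX0sub : X0 ⊆ Xs) (hXusub : Xu ⊆ Xs)
    (f : X → X) (hf : ∀ x ∈ Xs, f x ∈ Xs)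
    (ℓ : ℕ) (γ : ℝ) (hγ : 0 ≤ γ) (α : ℕ → ℝ) (hα : ∀ i < ℓ, 0 < α i)
    (B : ℕ → X → ℝ)
    (hB0 : ∀ i ≤ ℓ, ∀ x ∈ Xs, 0 ≤ B i x)
    (hBinit : ∀ x ∈ X0, B 0 x ≤ γ)
    (hBunsafe : ∀ i ≤ ℓ, ∀ x ∈ Xu, 1 ≤ B i x)
    (hBstep : ∀ i < ℓ, ∀ x ∈ Xs \ Xu, B (i + 1) (f x) ≤ α i * B i x)
    (hBsuper : ∀ x ∈ Xs \ Xu, B ℓ (f x) ≤ B ℓ x)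
    (hlt1 : ∀ j ≤ ℓ, γ * ∏ i ∈ Finset.range j, α i < 1)
    (x : ℕ → X) (hx0 : x 0 ∈ X0) (hstep : ∀ t, x (t + 1) = f (x t)) :
    (∀ t, x t ∉ Xu) ∧
    (∀ j < ℓ, B j (x j) ≤ γ * ∏ i ∈ Finset.range j, α i) ∧
    (∀ t, ℓ ≤ t → B ℓ (x t) ≤ γ * ∏ i ∈ Finset.range ℓ, α i) := by
  have key : ∀ t, x t ∈ Xs ∧ B (min t ℓ) (x t) ≤ γ * ∏ i ∈ Finset.range (min t ℓ), α i := by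
    intro t
    induction t with
    | zero =>
      refine ⟨hX0sub hx0, ?_⟩
      simpa using hBinit _ hx0
    | succ t ih =>
      obtain ⟨hmem, hbd⟩ := ih
      have hnot : x t ∉ Xu := by
        intro hu
        have h1 := hBunsafe (min t ℓ) (min_le_right _ _) _ hu
        have h2 := hlt1 (min t ℓ) (min_le_right _ _)
        linarith
      have hxs : x (t+1) ∈ Xs := by rw [hstep]; exact hf _ hmem
      refine ⟨hxs, ?_⟩
      rcases lt_or_ge t ℓ with h | h
      · have hm : min t ℓ = t := min_eq_left h.le
        have hm' : min (t+1) ℓ = t+1 := min_eq_left h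
        rw [hm] at hbd
        rw [hm', hstep, Finset.prod_range_succ, ← mul_assoc]
        calc B (t+1) (f (x t)) ≤ α t * B t (x t) := hBstep t h _ ⟨hmem, hnot⟩
          _ ≤ α t * (γ * ∏ i ∈ Finset.range t, α i) := by
              exact mul_le_mul_of_nonneg_left hbd (hα t h).le
          _ = (γ * ∏ i ∈ Finset.range t, α i) * α t := by ring
      · have hm : min t ℓ = ℓ := min_eq_right h
        have hm' : min (t+1) ℓ = ℓ := min_eq_right (h.trans (Nat.le_succ t))
        rw [hm] at hbd
        rw [hm', hstep]
        exact (hBsuper _ ⟨hmem, hnot⟩).trans hbd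
  have hnotu : ∀ t, x t ∉ Xu := by
    intro t hu
    have h1 := hBunsafe (min t ℓ) (min_le_right _ _) _ hu
    have h2 := hlt1 (min t ℓ) (min_le_right _ _)
    have := (key t).2
    linarith
  refine ⟨hnotu, ?_, ?_⟩
  · intro j hj
    have := (key j).2
    rwa [min_eq_left hj.le] at this
  · intro t ht
    have := (key t).2
    rwa [min_eq_right ht] at this
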